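/- Let N ≥ 2 be an integer, T > 0 and M > 0. Suppose u : (0,1]×(0,T) → ℝ is positive and C^{2,1} (u, u_r, u_{rr}, u_t continuous on (0,1]×(0,T)), extends continuously to [0,1]×(0,T), satisfies ∫₀¹ u(r,t) r^{N−1} dr = M for all t ∈ (0,T), satisfies for all (r,t) ∈ (0,1)×(0,T) the radial equation u_t = r^{1−N} ∂_r [ r^{N−1} u_r(r,t) + r^{N−1} u(r,t) ( r^{1−N} ∫₀^r u(ρ,t) ρ^{N−1} dρ )^{1/(N−1)} ], and satisfies the no-flux boundary condition u_r(1,t) + u(1,t) (∫₀¹ u(ρ,t) ρ^{N−1} dρ)^{1/(N−1)} = 0 for all t ∈ (0,T). Then U(ξ,t) := ∫₀^{ξ^{1/N}} u(r,t) r^{N−1} dr satisfies U_t = N² ξ^{2−2/N} U_{ξξ} + N ξ^{1−2/N} U^{1/(N−1)} U_ξ for all (ξ,t) ∈ (0,1)×(0,T), together with U(0,t) = 0 and U(1,t) = M for all t ∈ (0,T). -/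

import Mathlib

open Set

/-- **From the radial chemotaxis system to the accumulated-density equation.**
If `u > 0` is a `C^{2,1}` radial solution of
`u_t = r^{1−N} ∂_r[r^{N−1}u_r + r^{N−1}u (r^{1−N}∫₀^r u ρ^{N−1}dρ)^{1/(N−1)}]`
on `(0,1)×(0,T)` with total mass `M` and no-flux boundary condition at `r = 1`, then
`U(ξ,t) = ∫₀^{ξ^{1/N}} u r^{N−1} dr` solves
`U_t = N² ξ^{2−2/N} U_{ξξ} + N ξ^{1−2/N} U^{1/(N−1)} U_ξ` on `(0,1)×(0,T)` with
`U(0,t) = 0`, `U(1,t) = M`. -/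
theorem accumulated_density_equation
    (N : ℕ) (hN : 2 ≤ N)
    (T : ℝ) (hT : 0 < T) (M : ℝ) (hM : 0 < M)
    (u ur urr ut : ℝ → ℝ → ℝ)
    (hpos : ∀ r ∈ Ioc (0:ℝ) 1, ∀ t ∈ Ioo (0:ℝ) T, 0 < u r t)
    (hC21 : ∀ r ∈ Ioc (0:ℝ) 1, ∀ t ∈ Ioo (0:ℝ) T,
      HasDerivWithinAt (fun s => u s t) (ur r t) (Ioc 0 1) r ∧
      HasDerivWithinAt (fun s => ur s t) (urr r t) (Ioc 0 1) r ∧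
      HasDerivAt (fun τ => u r τ) (ut r t) t)
    (hu_cont : ContinuousOn (fun p : ℝ × ℝ => u p.1 p.2) (Ioc 0 1 ×ˢ Ioo 0 T))
    (hur_cont : ContinuousOn (fun p : ℝ × ℝ => ur p.1 p.2) (Ioc 0 1 ×ˢ Ioo 0 T))
    (hurr_cont : ContinuousOn (fun p : ℝ × ℝ => urr p.1 p.2) (Ioc 0 1 ×ˢ Ioo 0 T))
    (hut_cont : ContinuousOn (fun p : ℝ × ℝ => ut p.1 p.2) (Ioc 0 1 ×ˢ Ioo 0 T))
    (hu_ext : ContinuousOn (fun p : ℝ × ℝ => u p.1 p.2) (Icc 0 1 ×ˢ Ioo 0 T))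
    (hmass : ∀ t ∈ Ioo (0:ℝ) T, (∫ r in (0:ℝ)..1, u r t * r ^ (N - 1)) = M)
    (hPDE : ∀ r ∈ Ioo (0:ℝ) 1, ∀ t ∈ Ioo (0:ℝ) T,
      HasDerivAt (fun s : ℝ =>
          s ^ (N - 1) * ur s t + s ^ (N - 1) * u s t *
            (s ^ ((1 : ℝ) - N) * ∫ ρ in (0:ℝ)..s, u ρ t * ρ ^ (N - 1))
              ^ ((1 : ℝ) / ((N : ℝ) - 1)))
        (r ^ (N - 1) * ut r t) r)
    (hflux : ∀ t ∈ Ioo (0:ℝ) T,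
      ur 1 t + u 1 t * (∫ ρ in (0:ℝ)..1, u ρ t * ρ ^ (N - 1))
        ^ ((1 : ℝ) / ((N : ℝ) - 1)) = 0)
    (U : ℝ → ℝ → ℝ)
    (hU : ∀ ξ ∈ Icc (0:ℝ) 1, ∀ t ∈ Ioo (0:ℝ) T,
      U ξ t = ∫ r in (0:ℝ)..(ξ ^ ((1 : ℝ) / N)), u r t * r ^ (N - 1)) :
    ∀ t ∈ Ioo (0:ℝ) T,
      U 0 t = 0 ∧ U 1 t = M ∧
      ∀ ξ ∈ Ioo (0:ℝ) 1, ∃ Uξ Uξξ : ℝ,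
        HasDerivAt (fun s => U s t) Uξ ξ ∧
        HasDerivAt (deriv (fun s => U s t)) Uξξ ξ ∧
        HasDerivAt (fun τ => U ξ τ)
          ((N : ℝ) ^ 2 * ξ ^ ((2 : ℝ) - 2 / N) * Uξξ
            + (N : ℝ) * ξ ^ ((1 : ℝ) - 2 / N) * (U ξ t) ^ ((1 : ℝ) / ((N : ℝ) - 1)) * Uξ) t := by
  intro t ht
  obtain ⟨ht0, htT⟩ := ht
  have ht : t ∈ Ioo (0:ℝ) T := ⟨ht0, htT⟩
  have hN1 : 1 ≤ N := le_trans one_le_two hN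
  have hNR : (2:ℝ) ≤ (N:ℝ) := by exact_mod_cast hN
  have hN0 : (N:ℝ) ≠ 0 := by linarith
  have hNm1 : (0:ℝ) < (N:ℝ) - 1 := by linarith
  have hNexp : (0:ℝ) < 1 / (N:ℝ) := by positivity
  -- continuity of u(·,τ) on [0,1]
  have hcutτ : ∀ τ ∈ Ioo (0:ℝ) T, ContinuousOn (fun r => u r τ) (Icc (0:ℝ) 1) := by
    intro τ hτ r hr
    have := (hu_ext.comp (f := fun r : ℝ => (r, τ))
      (continuous_id.prodMk continuous_const).continuousOn
      (fun r hr => ⟨hr, hτ⟩)) r hr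
    exact this
  have hg_contτ : ∀ τ ∈ Ioo (0:ℝ) T,
      ContinuousOn (fun r : ℝ => u r τ * r ^ (N - 1)) (Icc (0:ℝ) 1) :=
    fun τ hτ => (hcutτ τ hτ).mul (continuousOn_pow _)
  have hg_intτ : ∀ τ ∈ Ioo (0:ℝ) T, ∀ a b : ℝ, a ∈ Icc (0:ℝ) 1 → b ∈ Icc (0:ℝ) 1 →
      IntervalIntegrable (fun r : ℝ => u r τ * r ^ (N - 1)) MeasureTheory.volume a b := by
    intro τ hτ a b ha hb
    exact ((hg_contτ τ hτ).mono (uIcc_subset_Icc ha hb)).intervalIntegrable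
  have hcut := hcutτ t ht
  have hg_cont := hg_contτ t ht
  have hg_int := hg_intτ t ht
  -- continuity of ur(·,t), ut(·,t) on (0,1]
  have hIocC : ∀ f : ℝ → ℝ → ℝ,
      ContinuousOn (fun p : ℝ × ℝ => f p.1 p.2) (Ioc 0 1 ×ˢ Ioo 0 T) →
      ContinuousOn (fun r => f r t) (Ioc (0:ℝ) 1) := by
    intro f hf r hr
    have := (hf.comp (f := fun r : ℝ => (r, t))
      (continuous_id.prodMk continuous_const).continuousOn
      (fun r hr => ⟨hr, ht⟩)) r hr
    exact this
  -- boundary values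
  have hU0 : U 0 t = 0 := by
    rw [hU 0 ⟨le_refl _, zero_le_one⟩ t ht, Real.zero_rpow (by positivity),
      intervalIntegral.integral_same]
  have hU1 : U 1 t = M := by
    rw [hU 1 ⟨zero_le_one, le_refl _⟩ t ht, Real.one_rpow, hmass t ht]
  refine ⟨hU0, hU1, ?_⟩
  intro ξ hξ
  set r₀ : ℝ := ξ ^ ((1:ℝ) / N) with hr₀def
  have hξ0 : (0:ℝ) < ξ := hξ.1
  have hr₀pos : 0 < r₀ := Real.rpow_pos_of_pos hξ0 _
  have hr₀lt : r₀ < 1 := Real.rpow_lt_one hξ0.le hξ.2 hNexp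
  -- continuity of g at interior points
  have hgC : ∀ s ∈ Ioo (0:ℝ) 1, ContinuousAt (fun r : ℝ => u r t * r ^ (N - 1)) s := by
    intro s hs
    have h1 : ContinuousAt (fun p : ℝ × ℝ => u p.1 p.2) (s, t) := by
      refine hu_cont.continuousAt ?_
      exact prod_mem_nhds (Ioc_mem_nhds hs.1 hs.2) (Ioo_mem_nhds ht0 htT)
    have h2 : ContinuousAt (fun r : ℝ => u r t) s := by
      have := h1.comp (f := fun r : ℝ => (r, t))
        (continuous_id.prodMk continuous_const).continuousAt
      exact this
    exact h2.mul (continuousAt_pow _ _)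
  -- key spatial derivative
  have keyU : ∀ s ∈ Ioo (0:ℝ) 1,
      HasDerivAt (fun x => U x t) (u (s ^ ((1:ℝ)/N)) t / N) s := by
    intro s hs
    set rs : ℝ := s ^ ((1:ℝ) / N) with hrs
    have hrs_pos : 0 < rs := Real.rpow_pos_of_pos hs.1 _
    have hrs_lt : rs < 1 := Real.rpow_lt_one hs.1.le hs.2 hNexp
    have hF : HasDerivAt (fun r => ∫ ρ in (0:ℝ)..r, u ρ t * ρ ^ (N - 1))
        (u rs t * rs ^ (N - 1)) rs := by
      refine intervalIntegral.integral_hasDerivAt_right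
        (hg_int 0 rs ⟨le_refl _, zero_le_one⟩ ⟨hrs_pos.le, hrs_lt.le⟩)
        ?_ (hgC rs ⟨hrs_pos, hrs_lt⟩)
      exact ⟨Ioo 0 1, Ioo_mem_nhds hrs_pos hrs_lt,
        ((hg_cont.mono (Ioo_subset_Icc_self)).aestronglyMeasurable measurableSet_Ioo)⟩
    have hφ : HasDerivAt (fun x : ℝ => x ^ ((1:ℝ) / N))
        ((1 / N) * s ^ ((1:ℝ) / N - 1)) s :=
      Real.hasDerivAt_rpow_const (Or.inl hs.1.ne')
    have hcomp := hF.comp s hφ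
    have hval : u rs t * rs ^ (N - 1) * (1 / ↑N * s ^ ((1:ℝ) / N - 1)) = u rs t / N := by
      have h1 : rs ^ (N - 1) * s ^ ((1:ℝ) / N - 1) = 1 := by
        rw [hrs, ← Real.rpow_natCast (s ^ ((1:ℝ)/N)) (N - 1), ← Real.rpow_mul hs.1.le,
          ← Real.rpow_add hs.1]
        rw [show (1:ℝ) / N * ((N:ℕ) - 1 : ℕ) + ((1:ℝ) / N - 1) = 0 by
          push_cast [Nat.cast_sub hN1]
          field_simp
          ring]
        exact Real.rpow_zero s
      calc u rs t * rs ^ (N - 1) * (1 / ↑N * s ^ ((1:ℝ) / N - 1))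
          = u rs t * (rs ^ (N - 1) * s ^ ((1:ℝ) / N - 1)) * (1 / N) := by ring
        _ = u rs t / N := by rw [h1, mul_one, mul_one_div]
    rw [hval] at hcomp
    refine hcomp.congr_of_eventuallyEq ?_
    filter_upwards [Ioo_mem_nhds hs.1 hs.2] with x hx
    exact hU x (Ioo_subset_Icc_self hx) t ht
  have hUξ := keyU ξ hξ
  -- second spatial derivative
  have hφξ : HasDerivAt (fun x : ℝ => x ^ ((1:ℝ) / N))
      ((1 / N) * ξ ^ ((1:ℝ) / N - 1)) ξ :=
    Real.hasDerivAt_rpow_const (Or.inl hξ0.ne')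
  have hu_r : HasDerivAt (fun s => u s t) (ur r₀ t) r₀ :=
    ((hC21 r₀ ⟨hr₀pos, hr₀lt.le⟩ t ht).1).hasDerivAt (Ioc_mem_nhds hr₀pos hr₀lt)
  have hUξξ : HasDerivAt (deriv (fun s => U s t))
      (ur r₀ t * (1 / N * ξ ^ ((1:ℝ) / N - 1)) / N) ξ := by
    have h2 : HasDerivAt (fun s : ℝ => u (s ^ ((1:ℝ)/N)) t / N)
        (ur r₀ t * (1 / N * ξ ^ ((1:ℝ) / N - 1)) / N) ξ := by
      rw [hr₀def] at hu_r; exact (hu_r.comp ξ hφξ).div_const N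
    refine h2.congr_of_eventuallyEq ?_
    filter_upwards [Ioo_mem_nhds hξ0 hξ.2] with s hs
    exact (keyU s hs).deriv
  refine ⟨u r₀ t / N, ur r₀ t * (1 / N * ξ ^ ((1:ℝ) / N - 1)) / N, hUξ, hUξξ, ?_⟩
  -- time derivative
  -- set up a compact time window
  set ε : ℝ := min t (T - t) / 2 with hεdef
  have hε1 : ε < t := by
    rw [hεdef]; have := min_le_left t (T - t); linarith
  have hε2 : ε < T - t := by
    rw [hεdef]; have := min_le_right t (T - t); linarith
  have hε : 0 < ε := by
    rw [hεdef]
    have h1 : 0 < min t (T - t) := lt_min ht0 (by linarith)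
    linarith
  have hball : Icc (t - ε) (t + ε) ⊆ Ioo (0:ℝ) T := by
    intro τ hτ
    obtain ⟨h1, h2⟩ := hτ
    exact ⟨by linarith, by linarith⟩
  have hIccIoc : Icc r₀ (1:ℝ) ⊆ Ioc 0 1 := fun s hs => ⟨lt_of_lt_of_le hr₀pos hs.1, hs.2⟩
  have hKsub : Icc r₀ 1 ×ˢ Icc (t - ε) (t + ε) ⊆ Ioc (0:ℝ) 1 ×ˢ Ioo (0:ℝ) T :=
    prod_mono hIccIoc hball
  obtain ⟨C, hC⟩ := (isCompact_Icc.prod isCompact_Icc).exists_bound_of_continuousOn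
    (hut_cont.mono hKsub)
  have hIsub : Set.uIoc r₀ (1:ℝ) = Ioc r₀ 1 := uIoc_of_le hr₀lt.le
  -- differentiation under the integral sign
  have hDer : HasDerivAt (fun τ => ∫ ρ in r₀..1, u ρ τ * ρ ^ (N - 1))
      (∫ ρ in r₀..1, ut ρ t * ρ ^ (N - 1)) t := by
    refine (intervalIntegral.hasDerivAt_integral_of_dominated_loc_of_deriv_le
      (𝕜 := ℝ) (μ := MeasureTheory.volume)
      (F := fun τ ρ => u ρ τ * ρ ^ (N - 1)) (F' := fun τ ρ => ut ρ τ * ρ ^ (N - 1))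
      (x₀ := t) (a := r₀) (b := 1) (bound := fun _ => |C|) (s := Metric.ball t ε) (Metric.ball_mem_nhds t hε)
      ?_ ?_ ?_ ?_ ?_ ?_).2
    · filter_upwards [Ioo_mem_nhds ht0 htT] with τ hτ
      rw [hIsub]
      exact (((hg_contτ τ hτ).mono (Ioc_subset_Icc_self.trans
        (Icc_subset_Icc hr₀pos.le le_rfl))).aestronglyMeasurable measurableSet_Ioc)
    · exact hg_int r₀ 1 ⟨hr₀pos.le, hr₀lt.le⟩ ⟨zero_le_one, le_refl _⟩
    · rw [hIsub]
      exact (((hIocC ut hut_cont).mono (Ioc_subset_Ioc hr₀pos.le le_rfl)).mul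
        (continuousOn_pow _)).aestronglyMeasurable measurableSet_Ioc
    · refine MeasureTheory.ae_of_all _ ?_
      intro ρ hρ τ hτ
      rw [hIsub] at hρ
      have hρ1 : ρ ∈ Icc r₀ 1 := Ioc_subset_Icc_self hρ
      have hτ' : τ ∈ Icc (t - ε) (t + ε) := by
        rw [Metric.mem_ball, Real.dist_eq] at hτ
        obtain ⟨h1, h2⟩ := abs_lt.mp hτ
        exact ⟨by linarith, by linarith⟩
      have hb := hC (ρ, τ) ⟨hρ1, hτ'⟩
      have hρpos : 0 < ρ := lt_of_lt_of_le hr₀pos hρ1.1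
      have hpow : |ρ ^ (N - 1)| ≤ 1 := by
        rw [abs_pow]
        exact pow_le_one₀ (abs_nonneg _) (by rw [abs_of_pos hρpos]; exact hρ1.2)
      have hbn : |ut ρ τ| ≤ |C| := le_trans hb (le_abs_self C)
      calc ‖ut ρ τ * ρ ^ (N - 1)‖ = |ut ρ τ| * |ρ ^ (N - 1)| := by
            rw [Real.norm_eq_abs, abs_mul]
        _ ≤ |C| * 1 := mul_le_mul hbn hpow (abs_nonneg _) (abs_nonneg _)
        _ = |C| := mul_one _
    · exact intervalIntegrable_const
    · refine MeasureTheory.ae_of_all _ ?_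
      intro ρ hρ τ hτ
      rw [hIsub] at hρ
      have hρ' : ρ ∈ Ioc (0:ℝ) 1 := ⟨lt_of_lt_of_le hr₀pos hρ.1.le, hρ.2⟩
      have hτ' : τ ∈ Ioo (0:ℝ) T := by
        apply hball
        rw [Metric.mem_ball, Real.dist_eq] at hτ
        obtain ⟨h1, h2⟩ := abs_lt.mp hτ
        exact ⟨by linarith, by linarith⟩
      exact ((hC21 ρ hρ' τ hτ').2.2).mul_const _
  -- U ξ τ = M - ∫_{r₀}^1
  have hUeq : ∀ᶠ τ in nhds t, U ξ τ =
      M - ∫ ρ in r₀..1, u ρ τ * ρ ^ (N - 1) := by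
    filter_upwards [Ioo_mem_nhds ht0 htT] with τ hτ
    have hadd := intervalIntegral.integral_add_adjacent_intervals
      (hg_intτ τ hτ 0 r₀ ⟨le_refl _, zero_le_one⟩ ⟨hr₀pos.le, hr₀lt.le⟩)
      (hg_intτ τ hτ r₀ 1 ⟨hr₀pos.le, hr₀lt.le⟩ ⟨zero_le_one, le_refl _⟩)
    have h1 := hU ξ (Ioo_subset_Icc_self hξ) τ hτ
    rw [← hr₀def] at h1
    have h2 := hmass τ hτ
    rw [h1]
    linarith
  have hUt : HasDerivAt (fun τ => U ξ τ)
      (-(∫ ρ in r₀..1, ut ρ t * ρ ^ (N - 1))) t :=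
    (hDer.const_sub M).congr_of_eventuallyEq hUeq
  -- FTC for the flux
  set W : ℝ → ℝ := fun s => s ^ (N - 1) * ur s t + s ^ (N - 1) * u s t *
      (s ^ ((1:ℝ) - N) * ∫ ρ in (0:ℝ)..s, u ρ t * ρ ^ (N - 1))
        ^ ((1:ℝ) / ((N:ℝ) - 1)) with hWdef
  have hWcont : ContinuousOn W (Icc r₀ 1) := by
    have c1 : ContinuousOn (fun s : ℝ => s ^ (N - 1)) (Icc r₀ 1) := continuousOn_pow _
    have c2 : ContinuousOn (fun s => ur s t) (Icc r₀ 1) :=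
      (hIocC ur hur_cont).mono hIccIoc
    have c3 : ContinuousOn (fun s => u s t) (Icc r₀ 1) :=
      hcut.mono (Icc_subset_Icc hr₀pos.le le_rfl)
    have c4 : ContinuousOn (fun s : ℝ => s ^ ((1:ℝ) - N)) (Icc r₀ 1) := fun s hs =>
      (Real.continuousAt_rpow_const s _
        (Or.inl (ne_of_gt (lt_of_lt_of_le hr₀pos hs.1)))).continuousWithinAt
    have c5 : ContinuousOn (fun s => ∫ ρ in (0:ℝ)..s, u ρ t * ρ ^ (N - 1)) (Icc r₀ 1) := by
      have := intervalIntegral.continuousOn_primitive_interval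
        (μ := MeasureTheory.volume) (a := (0:ℝ)) (b := (1:ℝ))
        (f := fun ρ : ℝ => u ρ t * ρ ^ (N - 1))
        (by rw [uIcc_of_le zero_le_one]
            exact hg_cont.integrableOn_compact isCompact_Icc)
      exact this.mono (by rw [uIcc_of_le zero_le_one]; exact Icc_subset_Icc hr₀pos.le le_rfl)
    have c6 : ContinuousOn
        (fun s => (s ^ ((1:ℝ) - N) * ∫ ρ in (0:ℝ)..s, u ρ t * ρ ^ (N - 1))
          ^ ((1:ℝ) / ((N:ℝ) - 1))) (Icc r₀ 1) :=
      (c4.mul c5).rpow_const (fun s _ => Or.inr (by positivity))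
    exact (c1.mul c2).add ((c1.mul c3).mul c6)
  have hint' : IntervalIntegrable (fun ρ => ut ρ t * ρ ^ (N - 1))
      MeasureTheory.volume r₀ 1 := by
    apply ContinuousOn.intervalIntegrable
    rw [uIcc_of_le hr₀lt.le]
    exact ((hIocC ut hut_cont).mono hIccIoc).mul (continuousOn_pow _)
  have hFTC : (∫ ρ in r₀..1, ut ρ t * ρ ^ (N - 1)) = W 1 - W r₀ := by
    refine intervalIntegral.integral_eq_sub_of_hasDerivAt_of_le hr₀lt.le hWcont ?_ hint'
    intro x hx
    have hx' : x ∈ Ioo (0:ℝ) 1 := ⟨lt_trans hr₀pos hx.1, hx.2⟩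
    have := hPDE x hx' t ht
    rw [hWdef]
    simpa [mul_comm] using this
  have hW1 : W 1 = 0 := by
    rw [hWdef]
    simp only [one_pow, Real.one_rpow, one_mul]
    exact hflux t ht
  -- put everything together
  have hUt' : HasDerivAt (fun τ => U ξ τ) (W r₀) t := by
    have : -(∫ ρ in r₀..1, ut ρ t * ρ ^ (N - 1)) = W r₀ := by
      rw [hFTC, hW1]; ring
    rwa [this] at hUt
  -- the algebraic identity
  set I : ℝ := ∫ ρ in (0:ℝ)..r₀, u ρ t * ρ ^ (N - 1) with hIdef
  have hI0 : 0 ≤ I := by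
    rw [hIdef]
    apply intervalIntegral.integral_nonneg hr₀pos.le
    intro ρ hρ
    rcases eq_or_lt_of_le hρ.1 with h | h
    · rw [← h]
      rw [zero_pow (by omega : N - 1 ≠ 0), mul_zero]
    · exact mul_nonneg (hpos ρ ⟨h, le_trans hρ.2 hr₀lt.le⟩ t ht).le (by positivity)
  have hUI : U ξ t = I := by
    rw [hU ξ (Ioo_subset_Icc_self hξ) t ht, ← hr₀def]
  have eq1 : r₀ ^ (N - 1) = ξ ^ ((2:ℝ) - 2 / N) * ξ ^ ((1:ℝ) / N - 1) := by
    rw [hr₀def, ← Real.rpow_natCast (ξ ^ ((1:ℝ) / N)) (N - 1), ← Real.rpow_mul hξ0.le,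
      ← Real.rpow_add hξ0]
    congr 1
    push_cast [Nat.cast_sub hN1]
    field_simp
    ring
  have eq2 : (r₀ ^ ((1:ℝ) - N) * I) ^ ((1:ℝ) / ((N:ℝ) - 1))
      = ξ ^ (-(1:ℝ) / N) * I ^ ((1:ℝ) / ((N:ℝ) - 1)) := by
    rw [Real.mul_rpow (Real.rpow_nonneg hr₀pos.le _) hI0]
    congr 1
    rw [hr₀def, ← Real.rpow_mul hξ0.le, ← Real.rpow_mul hξ0.le]
    congr 1
    field_simp
    ring
  have eq5 : ξ ^ ((1:ℝ) - 2 / N) =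
      ξ ^ ((2:ℝ) - 2 / N) * ξ ^ ((1:ℝ) / N - 1) * ξ ^ (-(1:ℝ) / N) := by
    rw [← Real.rpow_add hξ0, ← Real.rpow_add hξ0]
    congr 1
    ring
  have halg : (N : ℝ) ^ 2 * ξ ^ ((2 : ℝ) - 2 / N)
        * (ur r₀ t * (1 / N * ξ ^ ((1:ℝ) / N - 1)) / N)
      + (N : ℝ) * ξ ^ ((1 : ℝ) - 2 / N) * (U ξ t) ^ ((1 : ℝ) / ((N : ℝ) - 1))
        * (u r₀ t / N) = W r₀ := by
    rw [hWdef]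
    simp only []
    rw [← hIdef, hUI, eq1, eq2, eq5]
    field_simp
  rw [hr₀def] at halg ⊢
  rw [halg]
  rw [hr₀def] at hUt'
  exact hUt'
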